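/- There is a one-to-one correspondence between (ℓ,c)-block maps ψ : E^(1+ℓ+c) → F^(1+ℓ) and (ℓ,c)-sliding block codes h : E^∞ → F^∞; under this correspondence ψ satisfies the injectivity (resp. surjectivity) condition if and only if h is injective (resp. surjective). -/

import Mathlib

structure DGraph where
  V : Type
  E : Type
  src : E → V
  rng : E → V

namespace DGraph

def PathSpace (G : DGraph) : Type :=
  {x : ℕ → G.E // ∀ i, G.rng (x i) = G.src (x (i + 1))}

instance (G : DGraph) : TopologicalSpace G.PathSpace :=
  TopologicalSpace.induced Subtype.val (@Pi.topologicalSpace ℕ (fun _ => G.E) (fun _ => ⊥))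

def shift (G : DGraph) (x : G.PathSpace) : G.PathSpace :=
  ⟨fun i => x.1 (i + 1), fun i => x.2 (i + 1)⟩

def NoSinks (G : DGraph) : Prop := ∀ v : G.V, ∃ e : G.E, G.src e = v

def NoSources (G : DGraph) : Prop := ∀ v : G.V, ∃ e : G.E, G.rng e = v

def IsFinite (G : DGraph) : Prop := Finite G.V ∧ Finite G.E

def FinPath (G : DGraph) (n : ℕ) : Type :=
  {μ : Fin n → G.E // ∀ i j : Fin n, (j : ℕ) = (i : ℕ) + 1 → G.rng (μ i) = G.src (μ j)}

def seg (G : DGraph) (x : G.PathSpace) (i n : ℕ) : G.FinPath n :=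
  ⟨fun j => x.1 (i + (j : ℕ)), by
    rintro ⟨a, ha⟩ ⟨b, hb⟩ hab
    simp only at hab
    subst hab
    exact x.2 (i + a)⟩

def cyl (G : DGraph) {n : ℕ} (μ : G.FinPath n) : Set G.PathSpace :=
  {x | G.seg x 0 n = μ}

def lastEdge (G : DGraph) {ℓ : ℕ} (μ : G.FinPath (1 + ℓ)) : G.E :=
  μ.1 ⟨ℓ, by omega⟩

def IsSlidingBlockCode (E F : DGraph) (ℓ : ℕ) (h : E.PathSpace → F.PathSpace) : Prop :=
  Continuous h ∧ ∀ x, F.shift^[ℓ + 1] (h x) = F.shift^[ℓ] (h (E.shift x))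

def HasContinuityConstant (E F : DGraph) (ℓ c : ℕ) (h : E.PathSpace → F.PathSpace) : Prop :=
  ∀ k, ℓ ≤ k → ∀ x : E.PathSpace,
    h '' E.cyl (E.seg x 0 (k + c + 1)) ⊆ F.cyl (F.seg (h x) 0 (k + 1))

def IsConjugacy (E F : DGraph) (h : E.PathSpace → F.PathSpace) : Prop :=
  Continuous h ∧ Function.Bijective h ∧ ∀ x, F.shift (h x) = h (E.shift x)

def IsCompatible (E F : DGraph) (ℓ c : ℕ)
    (ψ : E.FinPath (1 + ℓ + c) → F.FinPath (1 + ℓ)) : Prop :=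
  ∀ x : E.PathSpace,
    F.rng (F.lastEdge (ψ (E.seg x 0 (1 + ℓ + c)))) =
      F.src (F.lastEdge (ψ (E.seg x 1 (1 + ℓ + c))))

def MatchesOut (E F : DGraph) (ℓ c : ℕ) (ψ : E.FinPath (1 + ℓ + c) → F.FinPath (1 + ℓ))
    (x : E.PathSpace) {k : ℕ} (hk : ℓ ≤ k) (β : F.FinPath (1 + k)) : Prop :=
  (∀ j : Fin (1 + ℓ), β.1 ⟨(j : ℕ), by have := j.isLt; omega⟩ = (ψ (E.seg x 0 (1 + ℓ + c))).1 j) ∧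
  (∀ i, (hi : ℓ + i ≤ k) → β.1 ⟨ℓ + i, by omega⟩ = F.lastEdge (ψ (E.seg x i (1 + ℓ + c))))

def InducedOnPaths (E F : DGraph) (ℓ c : ℕ) (ψ : E.FinPath (1 + ℓ + c) → F.FinPath (1 + ℓ))
    (h : E.PathSpace → F.PathSpace) : Prop :=
  ∀ (x : E.PathSpace) (k : ℕ) (hk : ℓ ≤ k), MatchesOut E F ℓ c ψ x hk (F.seg (h x) 0 (1 + k))

def SurjCondition (E F : DGraph) (ℓ c : ℕ)
    (ψ : E.FinPath (1 + ℓ + c) → F.FinPath (1 + ℓ)) : Prop :=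
  ∀ k (hk : ℓ ≤ k) (β : F.FinPath (1 + k)), ∃ x : E.PathSpace, MatchesOut E F ℓ c ψ x hk β

def InjCondition (E F : DGraph) (ℓ c : ℕ)
    (ψ : E.FinPath (1 + ℓ + c) → F.FinPath (1 + ℓ)) : Prop :=
  ∀ k, ℓ ≤ k → ∃ K : ℕ, ∀ x x' : E.PathSpace,
    (ψ (E.seg x 0 (1 + ℓ + c)) = ψ (E.seg x' 0 (1 + ℓ + c)) ∧
      ∀ i, ℓ + i ≤ k + K →
        F.lastEdge (ψ (E.seg x i (1 + ℓ + c))) = F.lastEdge (ψ (E.seg x' i (1 + ℓ + c)))) →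
    E.seg x 0 (k + 1) = E.seg x' 0 (k + 1)

def higherBlock (G : DGraph) (n : ℕ) : DGraph where
  V := G.FinPath n
  E := G.FinPath (n + 1)
  src := fun μ => ⟨fun i => μ.1 ⟨(i : ℕ), by have := i.isLt; omega⟩, by
    rintro ⟨a, ha⟩ ⟨b, hb⟩ hab
    exact μ.2 ⟨a, by omega⟩ ⟨b, by omega⟩ hab⟩
  rng := fun μ => ⟨fun i => μ.1 ⟨(i : ℕ) + 1, by have := i.isLt; omega⟩, by
    rintro ⟨a, ha⟩ ⟨b, hb⟩ hab
    exact μ.2 ⟨a + 1, by omega⟩ ⟨b + 1, by omega⟩ (by simp only at hab ⊢; omega)⟩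

def toHigherBlock (G : DGraph) (n : ℕ) (x : G.PathSpace) : (G.higherBlock n).PathSpace :=
  ⟨fun i => G.seg x i (n + 1), by
    intro i
    apply Subtype.ext
    funext j
    show x.1 (i + ((j : ℕ) + 1)) = x.1 ((i + 1) + (j : ℕ))
    have h2 : i + ((j : ℕ) + 1) = (i + 1) + (j : ℕ) := by omega
    rw [h2]⟩

end DGraph
namespace DGraph

instance instTopE (G : DGraph) : TopologicalSpace G.E := ⊥
instance (G : DGraph) : DiscreteTopology G.E := ⟨rfl⟩
instance instTopFP (G : DGraph) (n : ℕ) : TopologicalSpace (G.FinPath n) := ⊥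
instance (G : DGraph) (n : ℕ) : DiscreteTopology (G.FinPath n) := ⟨rfl⟩

lemma continuous_coord (G : DGraph) (i : ℕ) : Continuous fun x : G.PathSpace => x.1 i :=
  (continuous_apply i).comp continuous_subtype_val

lemma seg_apply (G : DGraph) (x : G.PathSpace) (i n j : ℕ) (hj : j < n) :
    (G.seg x i n).1 ⟨j, hj⟩ = x.1 (i + j) := rfl

lemma finpath_ext {G : DGraph} {n : ℕ} {μ ν : G.FinPath n}
    (h : ∀ j (hj : j < n), μ.1 ⟨j, hj⟩ = ν.1 ⟨j, hj⟩) : μ = ν :=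
  Subtype.ext (funext fun j => by simpa [Fin.eta] using h j j.2)

lemma seg_eq_iff {G : DGraph} {x y : G.PathSpace} {i i' n : ℕ} :
    G.seg x i n = G.seg y i' n ↔ ∀ j, j < n → x.1 (i + j) = y.1 (i' + j) := by
  constructor
  · intro h j hj
    have := congrArg (fun μ => μ.1 ⟨j, hj⟩) h
    simpa [seg_apply] using this
  · intro h
    exact finpath_ext fun j hj => h j hj

lemma continuous_seg (G : DGraph) (i n : ℕ) :
    Continuous fun x : G.PathSpace => G.seg x i n := by
  rw [continuous_discrete_rng]
  intro μ
  have : (fun x : G.PathSpace => G.seg x i n) ⁻¹' {μ}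
      = ⋂ j : Fin n, (fun x : G.PathSpace => x.1 (i + j)) ⁻¹' {μ.1 j} := by
    ext x
    simp only [Set.mem_preimage, Set.mem_singleton_iff, Set.mem_iInter]
    constructor
    · intro h j
      have := congrArg (fun ν => ν.1 j) h
      simpa [seg] using this
    · intro h
      exact finpath_ext fun j hj => h ⟨j, hj⟩
  rw [this]
  exact isOpen_iInter_of_finite fun j =>
    (isOpen_discrete _).preimage (continuous_coord G (i + j))

lemma shift_iter_apply (G : DGraph) (m : ℕ) (x : G.PathSpace) (n : ℕ) :
    (G.shift^[m] x).1 n = x.1 (m + n) := by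
  induction m generalizing x n with
  | zero => simp
  | succ m ih =>
    rw [Function.iterate_succ_apply]
    rw [ih]
    show x.1 (m + n + 1) = x.1 (m + 1 + n)
    have h : m + n + 1 = m + 1 + n := by omega
    rw [h]

lemma seg_shift_iter (G : DGraph) (m : ℕ) (x : G.PathSpace) (i n : ℕ) :
    G.seg (G.shift^[m] x) i n = G.seg x (m + i) n := by
  rw [seg_eq_iff]
  intro j hj
  rw [shift_iter_apply]
  have h : m + (i + j) = m + i + j := by omega
  rw [h]

end DGraph
namespace DGraph

lemma exists_path_extension (G : DGraph) (hns : G.NoSinks) {n : ℕ} (hn : 0 < n)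
    (μ : G.FinPath n) : ∃ x : G.PathSpace, ∀ j (hj : j < n), x.1 j = μ.1 ⟨j, hj⟩ := by
  classical
  let g : ℕ → G.E := fun k =>
    Nat.rec (μ.1 ⟨n - 1, by omega⟩) (fun _ e => (hns (G.rng e)).choose) k
  have hg : ∀ k, G.src (g (k + 1)) = G.rng (g k) := fun k => (hns (G.rng (g k))).choose_spec
  let f : ℕ → G.E := fun j => if h : j < n then μ.1 ⟨j, h⟩ else g (j - (n - 1))
  have hf1 : ∀ j (hj : j < n), f j = μ.1 ⟨j, hj⟩ := fun j hj => dif_pos hj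
  have hf2 : ∀ i, n - 1 ≤ i → f i = g (i - (n - 1)) := by
    intro i hi
    by_cases h : i < n
    · have hi' : i = n - 1 := by omega
      subst hi'
      rw [hf1 _ h]
      have h0 : n - 1 - (n - 1) = 0 := by omega
      rw [h0]
      rfl
    · exact dif_neg h
  refine ⟨⟨f, ?_⟩, hf1⟩
  intro i
  by_cases h : i + 1 < n
  · rw [hf1 i (by omega), hf1 (i + 1) h]
    exact μ.2 ⟨i, by omega⟩ ⟨i + 1, h⟩ rfl
  · have hi : n - 1 ≤ i := by omega
    rw [hf2 i hi, hf2 (i + 1) (by omega)]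
    have e : i + 1 - (n - 1) = (i - (n - 1)) + 1 := by omega
    rw [e, hg]

lemma compactSpace_pathSpace (G : DGraph) (hfin : Finite G.E) : CompactSpace G.PathSpace := by
  haveI := hfin
  have hclosed : IsClosed {x : ℕ → G.E | ∀ i, G.rng (x i) = G.src (x (i + 1))} := by
    have he : {x : ℕ → G.E | ∀ i, G.rng (x i) = G.src (x (i + 1))}
        = ⋂ i, {x : ℕ → G.E | G.rng (x i) = G.src (x (i + 1))} := by
      ext x; simp [Set.mem_iInter]
    rw [he]
    refine isClosed_iInter fun i => ?_
    have he2 : {x : ℕ → G.E | G.rng (x i) = G.src (x (i + 1))}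
        = (fun x : ℕ → G.E => (x i, x (i + 1))) ⁻¹' {p : G.E × G.E | G.rng p.1 = G.src p.2} :=
      rfl
    rw [he2]
    exact (isClosed_discrete _).preimage ((continuous_apply i).prodMk (continuous_apply (i + 1)))
  exact isCompact_iff_compactSpace.mp hclosed.isCompact

lemma hcc_pointwise {E F : DGraph} {ℓ c : ℕ} {h : E.PathSpace → F.PathSpace}
    (hh : HasContinuityConstant E F ℓ c h) :
    ∀ k, ℓ ≤ k → ∀ x y : E.PathSpace, (∀ j, j ≤ k + c → y.1 j = x.1 j) →
      ∀ j, j ≤ k → (h y).1 j = (h x).1 j := by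
  intro k hk x y hxy j hj
  have hmem : y ∈ E.cyl (E.seg x 0 (k + c + 1)) := by
    show E.seg y 0 (k + c + 1) = E.seg x 0 (k + c + 1)
    rw [seg_eq_iff]
    intro m hm
    simpa [Nat.zero_add] using hxy m (by omega)
  have h2 : E.seg y 0 (k + c + 1) = E.seg x 0 (k + c + 1) := hmem
  have h3 : h y ∈ F.cyl (F.seg (h x) 0 (k + 1)) := hh k hk x ⟨y, hmem, rfl⟩
  have h4 : F.seg (h y) 0 (k + 1) = F.seg (h x) 0 (k + 1) := h3
  have := seg_eq_iff.mp h4 j (by omega)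
  simpa [Nat.zero_add] using this

lemma hcc_of_pointwise {E F : DGraph} {ℓ c : ℕ} {h : E.PathSpace → F.PathSpace}
    (hp : ∀ k, ℓ ≤ k → ∀ x y : E.PathSpace, (∀ j, j ≤ k + c → y.1 j = x.1 j) →
      ∀ j, j ≤ k → (h y).1 j = (h x).1 j) :
    HasContinuityConstant E F ℓ c h := by
  intro k hk x z hz
  obtain ⟨y, hy, rfl⟩ := hz
  have hy' : E.seg y 0 (k + c + 1) = E.seg x 0 (k + c + 1) := hy
  show F.seg (h y) 0 (k + 1) = F.seg (h x) 0 (k + 1)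
  rw [seg_eq_iff]
  intro j hj
  simp only [Nat.zero_add]
  refine hp k hk x y ?_ j (by omega)
  intro m hm
  simpa [Nat.zero_add] using seg_eq_iff.mp hy' m (by omega)

lemma sbc_coord {E F : DGraph} {ℓ : ℕ} {h : E.PathSpace → F.PathSpace}
    (hs : ∀ x, F.shift^[ℓ + 1] (h x) = F.shift^[ℓ] (h (E.shift x))) :
    ∀ (x : E.PathSpace) (i m : ℕ), (h (E.shift^[i] x)).1 (ℓ + m) = (h x).1 (ℓ + i + m) := by
  intro x i
  induction i generalizing x with
  | zero => intro m; simp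
  | succ i ih =>
    intro m
    rw [Function.iterate_succ_apply]
    rw [ih (E.shift x) m]
    have h1 := congrArg (fun y : F.PathSpace => y.1 (i + m)) (hs x)
    simp only [shift_iter_apply] at h1
    have e1 : ℓ + i + m = ℓ + (i + m) := by omega
    have e2 : ℓ + (i + 1) + m = ℓ + 1 + (i + m) := by omega
    rw [e1, e2]
    exact h1.symm

end DGraph
namespace DGraph

variable (E F : DGraph) (ℓ c : ℕ)

def toHFun (ψ : E.FinPath (1 + ℓ + c) → F.FinPath (1 + ℓ)) (x : E.PathSpace) (n : ℕ) : F.E :=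
  if h : n < ℓ then (ψ (E.seg x 0 (1 + ℓ + c))).1 ⟨n, by omega⟩
  else F.lastEdge (ψ (E.seg x (n - ℓ) (1 + ℓ + c)))

lemma toHFun_ge (ψ : E.FinPath (1 + ℓ + c) → F.FinPath (1 + ℓ)) (x : E.PathSpace) (i : ℕ) :
    toHFun E F ℓ c ψ x (ℓ + i) = F.lastEdge (ψ (E.seg x i (1 + ℓ + c))) := by
  unfold toHFun
  rw [dif_neg (by omega)]
  have e : ℓ + i - ℓ = i := by omega
  rw [e]

lemma toHFun_adj (ψ : E.FinPath (1 + ℓ + c) → F.FinPath (1 + ℓ))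
    (hψ : IsCompatible E F ℓ c ψ) (x : E.PathSpace) (n : ℕ) :
    F.rng (toHFun E F ℓ c ψ x n) = F.src (toHFun E F ℓ c ψ x (n + 1)) := by
  rcases lt_trichotomy (n + 1) ℓ with h | h | h
  · unfold toHFun
    rw [dif_pos (by omega), dif_pos h]
    exact (ψ _).2 ⟨n, by omega⟩ ⟨n + 1, by omega⟩ rfl
  · unfold toHFun
    rw [dif_pos (by omega), dif_neg (by omega)]
    have h0 : n + 1 - ℓ = 0 := by omega
    rw [h0]
    exact (ψ _).2 ⟨n, by omega⟩ ⟨ℓ, by omega⟩ (by simp only; omega)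
  · unfold toHFun
    rw [dif_neg (by omega), dif_neg (by omega)]
    have h2 := hψ (E.shift^[n - ℓ] x)
    rw [seg_shift_iter, seg_shift_iter] at h2
    have e1 : n - ℓ + 1 = n + 1 - ℓ := by omega
    simpa [e1] using h2

def toH (ψ : E.FinPath (1 + ℓ + c) → F.FinPath (1 + ℓ)) (hψ : IsCompatible E F ℓ c ψ)
    (x : E.PathSpace) : F.PathSpace :=
  ⟨toHFun E F ℓ c ψ x, toHFun_adj E F ℓ c ψ hψ x⟩

lemma continuous_toH (ψ : E.FinPath (1 + ℓ + c) → F.FinPath (1 + ℓ))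
    (hψ : IsCompatible E F ℓ c ψ) : Continuous (toH E F ℓ c ψ hψ) := by
  apply Continuous.subtype_mk
  apply continuous_pi
  intro n
  by_cases hn : n < ℓ
  · have he : (fun x : E.PathSpace => toHFun E F ℓ c ψ x n)
        = (fun μ : E.FinPath (1 + ℓ + c) => (ψ μ).1 ⟨n, by omega⟩) ∘
          (fun x => E.seg x 0 (1 + ℓ + c)) := by
      funext x
      simp [toHFun, hn]
    rw [he]
    exact continuous_of_discreteTopology.comp (continuous_seg E 0 (1 + ℓ + c))
  · have he : (fun x : E.PathSpace => toHFun E F ℓ c ψ x n)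
        = (fun μ : E.FinPath (1 + ℓ + c) => F.lastEdge (ψ μ)) ∘
          (fun x => E.seg x (n - ℓ) (1 + ℓ + c)) := by
      funext x
      simp [toHFun, hn]
    rw [he]
    exact continuous_of_discreteTopology.comp (continuous_seg E (n - ℓ) (1 + ℓ + c))

lemma sbc_toH (ψ : E.FinPath (1 + ℓ + c) → F.FinPath (1 + ℓ)) (hψ : IsCompatible E F ℓ c ψ) :
    ∀ x, F.shift^[ℓ + 1] (toH E F ℓ c ψ hψ x) = F.shift^[ℓ] (toH E F ℓ c ψ hψ (E.shift x)) := by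
  intro x
  apply Subtype.ext
  funext n
  show (F.shift^[ℓ + 1] (toH E F ℓ c ψ hψ x)).1 n = (F.shift^[ℓ] (toH E F ℓ c ψ hψ (E.shift x))).1 n
  rw [shift_iter_apply, shift_iter_apply]
  show toHFun E F ℓ c ψ x (ℓ + 1 + n) = toHFun E F ℓ c ψ (E.shift x) (ℓ + n)
  have e1 : ℓ + 1 + n = ℓ + (1 + n) := by omega
  rw [e1, toHFun_ge, toHFun_ge]
  congr 1
  have h1 : E.shift x = E.shift^[1] x := rfl
  rw [h1, seg_shift_iter]

lemma hcc_toH (ψ : E.FinPath (1 + ℓ + c) → F.FinPath (1 + ℓ)) (hψ : IsCompatible E F ℓ c ψ) :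
    HasContinuityConstant E F ℓ c (toH E F ℓ c ψ hψ) := by
  apply hcc_of_pointwise
  intro k hk x y hxy j hj
  show toHFun E F ℓ c ψ y j = toHFun E F ℓ c ψ x j
  have hseg : ∀ i, i + ℓ + c ≤ k + c → E.seg y i (1 + ℓ + c) = E.seg x i (1 + ℓ + c) := by
    intro i hi
    rw [seg_eq_iff]
    intro m hm
    exact hxy (i + m) (by omega)
  by_cases hn : j < ℓ
  · unfold toHFun
    rw [dif_pos hn, dif_pos hn, hseg 0 (by omega)]
  · unfold toHFun
    rw [dif_neg hn, dif_neg hn, hseg (j - ℓ) (by omega)]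

lemma inducedOnPaths_toH (ψ : E.FinPath (1 + ℓ + c) → F.FinPath (1 + ℓ))
    (hψ : IsCompatible E F ℓ c ψ) :
    InducedOnPaths E F ℓ c ψ (toH E F ℓ c ψ hψ) := by
  intro x k hk
  constructor
  · rintro ⟨j, hj⟩
    show toHFun E F ℓ c ψ x (0 + j) = _
    rw [Nat.zero_add]
    by_cases h : j < ℓ
    · unfold toHFun
      rw [dif_pos h]
    · unfold toHFun
      rw [dif_neg h]
      have e : j - ℓ = 0 := by omega
      rw [e]
      unfold lastEdge
      have hfe : (⟨ℓ, by omega⟩ : Fin (1 + ℓ)) = ⟨j, hj⟩ := by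
        apply Fin.ext
        show ℓ = j
        omega
      rw [hfe]
  · intro i hi
    show toHFun E F ℓ c ψ x (0 + (ℓ + i)) = _
    rw [Nat.zero_add, toHFun_ge]

end DGraph
namespace DGraph

variable (E F : DGraph) (ℓ c : ℕ)

noncomputable def extPath (G : DGraph) (hns : G.NoSinks) {n : ℕ} (hn : 0 < n)
    (μ : G.FinPath n) : G.PathSpace :=
  (exists_path_extension G hns hn μ).choose

lemma extPath_spec (G : DGraph) (hns : G.NoSinks) {n : ℕ} (hn : 0 < n) (μ : G.FinPath n) :
    ∀ j (hj : j < n), (extPath G hns hn μ).1 j = μ.1 ⟨j, hj⟩ :=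
  (exists_path_extension G hns hn μ).choose_spec

noncomputable def toPsi (hns : E.NoSinks) (h : E.PathSpace → F.PathSpace)
    (μ : E.FinPath (1 + ℓ + c)) : F.FinPath (1 + ℓ) :=
  F.seg (h (extPath E hns (by omega) μ)) 0 (1 + ℓ)

lemma toPsi_first (hns : E.NoSinks) (h : E.PathSpace → F.PathSpace)
    (hhcc : HasContinuityConstant E F ℓ c h) (x : E.PathSpace) (j : Fin (1 + ℓ)) :
    (toPsi E F ℓ c hns h (E.seg x 0 (1 + ℓ + c))).1 j = (h x).1 (j : ℕ) := by
  set y := extPath E hns (show 0 < 1 + ℓ + c by omega) (E.seg x 0 (1 + ℓ + c)) with hy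
  have hagree : ∀ m, m ≤ ℓ + c → y.1 m = x.1 m := by
    intro m hm
    rw [extPath_spec E hns _ _ m (by omega), seg_apply, Nat.zero_add]
  have h1 := hcc_pointwise hhcc ℓ le_rfl x y hagree (j : ℕ) (by omega)
  show (F.seg (h y) 0 (1 + ℓ)).1 j = (h x).1 (j : ℕ)
  have h2 : (F.seg (h y) 0 (1 + ℓ)).1 j = (h y).1 (0 + (j : ℕ)) := by
    rw [← seg_apply F (h y) 0 (1 + ℓ) (j : ℕ) j.2]
  rw [h2, Nat.zero_add, h1]

lemma toPsi_last (hns : E.NoSinks) (h : E.PathSpace → F.PathSpace)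
    (hsbc : ∀ x, F.shift^[ℓ + 1] (h x) = F.shift^[ℓ] (h (E.shift x)))
    (hhcc : HasContinuityConstant E F ℓ c h) (x : E.PathSpace) (i : ℕ) :
    F.lastEdge (toPsi E F ℓ c hns h (E.seg x i (1 + ℓ + c))) = (h x).1 (ℓ + i) := by
  set y := extPath E hns (show 0 < 1 + ℓ + c by omega) (E.seg x i (1 + ℓ + c)) with hy
  have hagree : ∀ m, m ≤ ℓ + c → y.1 m = (E.shift^[i] x).1 m := by
    intro m hm
    rw [extPath_spec E hns _ _ m (by omega), seg_apply, shift_iter_apply]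
  have h1 := hcc_pointwise hhcc ℓ le_rfl (E.shift^[i] x) y hagree ℓ le_rfl
  have h2 := sbc_coord hsbc x i 0
  simp only [Nat.add_zero] at h2
  show (F.seg (h y) 0 (1 + ℓ)).1 ⟨ℓ, by omega⟩ = (h x).1 (ℓ + i)
  rw [seg_apply, Nat.zero_add, h1, h2]

lemma toPsi_compat (hns : E.NoSinks) (h : E.PathSpace → F.PathSpace)
    (hsbc : ∀ x, F.shift^[ℓ + 1] (h x) = F.shift^[ℓ] (h (E.shift x)))
    (hhcc : HasContinuityConstant E F ℓ c h) :
    IsCompatible E F ℓ c (toPsi E F ℓ c hns h) := by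
  intro x
  have h0 := toPsi_last E F ℓ c hns h hsbc hhcc x 0
  have h1 := toPsi_last E F ℓ c hns h hsbc hhcc x 1
  rw [h0, h1]
  have := (h x).2 ℓ
  simpa using this

lemma toPsi_toH (hns : E.NoSinks) (ψ : E.FinPath (1 + ℓ + c) → F.FinPath (1 + ℓ))
    (hψ : IsCompatible E F ℓ c ψ) :
    toPsi E F ℓ c hns (toH E F ℓ c ψ hψ) = ψ := by
  funext μ
  set x := extPath E hns (show 0 < 1 + ℓ + c by omega) μ with hxdef
  have hx : E.seg x 0 (1 + ℓ + c) = μ := by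
    apply finpath_ext
    intro j hj
    rw [seg_apply, Nat.zero_add]
    exact extPath_spec E hns _ μ j hj
  show F.seg (toH E F ℓ c ψ hψ x) 0 (1 + ℓ) = ψ μ
  apply finpath_ext
  intro j hj
  have h1 := (inducedOnPaths_toH E F ℓ c ψ hψ x ℓ le_rfl).1 ⟨j, hj⟩
  rw [hx] at h1
  exact h1

lemma toH_toPsi (hns : E.NoSinks) (h : E.PathSpace → F.PathSpace)
    (hsbc : ∀ x, F.shift^[ℓ + 1] (h x) = F.shift^[ℓ] (h (E.shift x)))
    (hhcc : HasContinuityConstant E F ℓ c h)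
    (hcompat : IsCompatible E F ℓ c (toPsi E F ℓ c hns h)) :
    toH E F ℓ c (toPsi E F ℓ c hns h) hcompat = h := by
  funext x
  apply Subtype.ext
  funext n
  show toHFun E F ℓ c (toPsi E F ℓ c hns h) x n = (h x).1 n
  by_cases hn : n < ℓ
  · unfold toHFun
    rw [dif_pos hn]
    exact toPsi_first E F ℓ c hns h hhcc x ⟨n, by omega⟩
  · have e : n = ℓ + (n - ℓ) := by omega
    rw [e, toHFun_ge, toPsi_last E F ℓ c hns h hsbc hhcc x (n - ℓ)]

end DGraph
namespace DGraph

variable {E F : DGraph} {ℓ c : ℕ}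

lemma induced_first {ψ : E.FinPath (1 + ℓ + c) → F.FinPath (1 + ℓ)}
    {h : E.PathSpace → F.PathSpace} (hind : InducedOnPaths E F ℓ c ψ h)
    (x : E.PathSpace) (j : Fin (1 + ℓ)) :
    (ψ (E.seg x 0 (1 + ℓ + c))).1 j = (h x).1 (j : ℕ) := by
  have h1 := (hind x ℓ le_rfl).1 j
  rw [seg_apply, Nat.zero_add] at h1
  exact h1.symm

lemma induced_last {ψ : E.FinPath (1 + ℓ + c) → F.FinPath (1 + ℓ)}
    {h : E.PathSpace → F.PathSpace} (hind : InducedOnPaths E F ℓ c ψ h)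
    (x : E.PathSpace) (i : ℕ) :
    F.lastEdge (ψ (E.seg x i (1 + ℓ + c))) = (h x).1 (ℓ + i) := by
  have h1 := (hind x (ℓ + i) (by omega)).2 i (by omega)
  rw [seg_apply, Nat.zero_add] at h1
  exact h1.symm

lemma matchesOut_coords {ψ : E.FinPath (1 + ℓ + c) → F.FinPath (1 + ℓ)}
    {h : E.PathSpace → F.PathSpace} (hind : InducedOnPaths E F ℓ c ψ h)
    {x : E.PathSpace} {k : ℕ} (hk : ℓ ≤ k) {β : F.FinPath (1 + k)}
    (hm : MatchesOut E F ℓ c ψ x hk β) :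
    ∀ j (hj : j ≤ k), (h x).1 j = β.1 ⟨j, by omega⟩ := by
  intro j hj
  by_cases hjl : j ≤ ℓ
  · have h1 := hm.1 ⟨j, by omega⟩
    have h2 := induced_first hind x ⟨j, by omega⟩
    rw [h2] at h1
    exact h1.symm
  · have h1 := hm.2 (j - ℓ) (by omega)
    have h2 := induced_last hind x (j - ℓ)
    rw [h2] at h1
    have hfe : (⟨ℓ + (j - ℓ), by omega⟩ : Fin (1 + k)) = ⟨j, by omega⟩ := by
      apply Fin.ext
      show ℓ + (j - ℓ) = j
      omega
    rw [hfe] at h1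
    have e : ℓ + (j - ℓ) = j := by omega
    rw [e] at h1
    exact h1.symm

lemma surjCond_iff {ψ : E.FinPath (1 + ℓ + c) → F.FinPath (1 + ℓ)}
    {h : E.PathSpace → F.PathSpace} (hEfin : E.IsFinite) (hFns : F.NoSinks)
    (hcont : Continuous h) (hind : InducedOnPaths E F ℓ c ψ h) :
    SurjCondition E F ℓ c ψ ↔ Function.Surjective h := by
  constructor
  · intro hsc y
    haveI := compactSpace_pathSpace E hEfin.2
    set D : ℕ → Set E.PathSpace := fun k => {x | ∀ j, j ≤ ℓ + k → (h x).1 j = y.1 j} with hD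
    have hne : ∀ k, (D k).Nonempty := by
      intro k
      obtain ⟨x, hx⟩ := hsc (ℓ + k) (by omega) (F.seg y 0 (1 + (ℓ + k)))
      refine ⟨x, fun j hj => ?_⟩
      rw [matchesOut_coords hind (by omega) hx j hj, seg_apply, Nat.zero_add]
    have hdir : Directed (· ⊇ ·) D := by
      intro a b
      exact ⟨max a b, fun x hx j hj => hx j (by omega), fun x hx j hj => hx j (by omega)⟩
    have hcl : ∀ k, IsClosed (D k) := by
      intro k
      have he : D k = ⋂ j : Fin (ℓ + k + 1),
          (fun x : E.PathSpace => (h x).1 (j : ℕ)) ⁻¹' {y.1 (j : ℕ)} := by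
        ext x
        simp only [hD, Set.mem_setOf_eq, Set.mem_iInter, Set.mem_preimage,
          Set.mem_singleton_iff]
        constructor
        · intro hx j
          exact hx (j : ℕ) (by omega)
        · intro hx j hj
          exact hx ⟨j, by omega⟩
      rw [he]
      exact isClosed_iInter fun j =>
        (isClosed_discrete _).preimage ((continuous_coord F (j : ℕ)).comp hcont)
    obtain ⟨x, hx⟩ := IsCompact.nonempty_iInter_of_directed_nonempty_isCompact_isClosed
      D hdir hne (fun k => (hcl k).isCompact) hcl
    refine ⟨x, ?_⟩
    apply Subtype.ext
    funext j
    exact (Set.mem_iInter.mp hx j) j (by omega)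
  · intro hsurj k hk β
    obtain ⟨y, hy⟩ := exists_path_extension F hFns (show 0 < 1 + k by omega) β
    obtain ⟨x, hx⟩ := hsurj y
    refine ⟨x, ?_, ?_⟩
    · intro j
      have h1 := induced_first hind x j
      rw [h1, hx]
      rw [hy (j : ℕ) (by have := j.2; omega)]
    · intro i hi
      have h1 := induced_last hind x i
      rw [h1, hx]
      exact (hy (ℓ + i) (by omega)).symm

lemma injCond_iff {ψ : E.FinPath (1 + ℓ + c) → F.FinPath (1 + ℓ)}
    {h : E.PathSpace → F.PathSpace} (hEfin : E.IsFinite)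
    (hcont : Continuous h) (hind : InducedOnPaths E F ℓ c ψ h) :
    InjCondition E F ℓ c ψ ↔ Function.Injective h := by
  constructor
  · intro hic x x' hxx
    apply Subtype.ext
    funext n
    obtain ⟨K, hK⟩ := hic (max n ℓ) (le_max_right _ _)
    have hcond1 : ψ (E.seg x 0 (1 + ℓ + c)) = ψ (E.seg x' 0 (1 + ℓ + c)) := by
      apply finpath_ext
      intro j hj
      rw [induced_first hind x ⟨j, hj⟩, induced_first hind x' ⟨j, hj⟩, hxx]
    have hcond2 : ∀ i, ℓ + i ≤ max n ℓ + K →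
        F.lastEdge (ψ (E.seg x i (1 + ℓ + c))) = F.lastEdge (ψ (E.seg x' i (1 + ℓ + c))) := by
      intro i _
      rw [induced_last hind x i, induced_last hind x' i, hxx]
    have hseg := hK x x' ⟨hcond1, hcond2⟩
    have := seg_eq_iff.mp hseg n (by omega)
    simpa [Nat.zero_add] using this
  · intro hinj k hk
    haveI := compactSpace_pathSpace E hEfin.2
    by_contra hcon
    push_neg at hcon
    set S : ℕ → Set (E.PathSpace × E.PathSpace) := fun K =>
      {p | (ψ (E.seg p.1 0 (1 + ℓ + c)) = ψ (E.seg p.2 0 (1 + ℓ + c)) ∧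
        ∀ i, ℓ + i ≤ k + K → F.lastEdge (ψ (E.seg p.1 i (1 + ℓ + c))) =
          F.lastEdge (ψ (E.seg p.2 i (1 + ℓ + c)))) ∧
        E.seg p.1 0 (k + 1) ≠ E.seg p.2 0 (k + 1)} with hS
    have hne : ∀ K, (S K).Nonempty := by
      intro K
      obtain ⟨x, x', hc, hne⟩ := hcon K
      exact ⟨(x, x'), hc, hne⟩
    have hdir : Directed (· ⊇ ·) S := by
      intro a b
      refine ⟨max a b, ?_, ?_⟩ <;>
        exact fun p hp => ⟨⟨hp.1.1, fun i hi => hp.1.2 i (by omega)⟩, hp.2⟩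
    have hcl : ∀ K, IsClosed (S K) := by
      intro K
      have hc1 : IsClosed {p : E.PathSpace × E.PathSpace |
          ψ (E.seg p.1 0 (1 + ℓ + c)) = ψ (E.seg p.2 0 (1 + ℓ + c))} := by
        have he : {p : E.PathSpace × E.PathSpace |
            ψ (E.seg p.1 0 (1 + ℓ + c)) = ψ (E.seg p.2 0 (1 + ℓ + c))}
            = (fun p : E.PathSpace × E.PathSpace =>
                (ψ (E.seg p.1 0 (1 + ℓ + c)), ψ (E.seg p.2 0 (1 + ℓ + c)))) ⁻¹'
              {q : F.FinPath (1 + ℓ) × F.FinPath (1 + ℓ) | q.1 = q.2} := rfl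
        rw [he]
        refine (isClosed_discrete _).preimage ?_
        exact ((continuous_of_discreteTopology.comp
            ((continuous_seg E 0 (1 + ℓ + c)).comp continuous_fst)).prodMk
          (continuous_of_discreteTopology.comp
            ((continuous_seg E 0 (1 + ℓ + c)).comp continuous_snd)))
      have hc2 : IsClosed {p : E.PathSpace × E.PathSpace | ∀ i, ℓ + i ≤ k + K →
          F.lastEdge (ψ (E.seg p.1 i (1 + ℓ + c))) =
            F.lastEdge (ψ (E.seg p.2 i (1 + ℓ + c)))} := by
        have he : {p : E.PathSpace × E.PathSpace | ∀ i, ℓ + i ≤ k + K →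
            F.lastEdge (ψ (E.seg p.1 i (1 + ℓ + c))) =
              F.lastEdge (ψ (E.seg p.2 i (1 + ℓ + c)))}
            = ⋂ i, ⋂ (_ : ℓ + i ≤ k + K),
              (fun p : E.PathSpace × E.PathSpace =>
                (F.lastEdge (ψ (E.seg p.1 i (1 + ℓ + c))),
                  F.lastEdge (ψ (E.seg p.2 i (1 + ℓ + c))))) ⁻¹'
                {q : F.E × F.E | q.1 = q.2} := by
          ext p
          simp only [Set.mem_setOf_eq, Set.mem_iInter, Set.mem_preimage]
        rw [he]
        refine isClosed_iInter fun i => isClosed_iInter fun _ => ?_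
        refine (isClosed_discrete _).preimage ?_
        exact (((continuous_of_discreteTopology
              (f := fun μ : E.FinPath (1 + ℓ + c) => F.lastEdge (ψ μ))).comp
            ((continuous_seg E i (1 + ℓ + c)).comp continuous_fst)).prodMk
          ((continuous_of_discreteTopology
              (f := fun μ : E.FinPath (1 + ℓ + c) => F.lastEdge (ψ μ))).comp
            ((continuous_seg E i (1 + ℓ + c)).comp continuous_snd)))
      have hc3 : IsClosed {p : E.PathSpace × E.PathSpace |
          E.seg p.1 0 (k + 1) ≠ E.seg p.2 0 (k + 1)} := by
        have he : {p : E.PathSpace × E.PathSpace |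
            E.seg p.1 0 (k + 1) ≠ E.seg p.2 0 (k + 1)}
            = ((fun p : E.PathSpace × E.PathSpace =>
                (E.seg p.1 0 (k + 1), E.seg p.2 0 (k + 1))) ⁻¹'
              {q : E.FinPath (k + 1) × E.FinPath (k + 1) | q.1 = q.2})ᶜ := rfl
        rw [he]
        apply IsOpen.isClosed_compl
        refine (isOpen_discrete _).preimage ?_
        exact ((continuous_seg E 0 (k + 1)).comp continuous_fst).prodMk
          ((continuous_seg E 0 (k + 1)).comp continuous_snd)
      have he2 : S K = ({p : E.PathSpace × E.PathSpace |
          ψ (E.seg p.1 0 (1 + ℓ + c)) = ψ (E.seg p.2 0 (1 + ℓ + c))} ∩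
          {p : E.PathSpace × E.PathSpace | ∀ i, ℓ + i ≤ k + K →
            F.lastEdge (ψ (E.seg p.1 i (1 + ℓ + c))) =
              F.lastEdge (ψ (E.seg p.2 i (1 + ℓ + c)))}) ∩
          {p : E.PathSpace × E.PathSpace |
            E.seg p.1 0 (k + 1) ≠ E.seg p.2 0 (k + 1)} := rfl
      rw [he2]
      exact (hc1.inter hc2).inter hc3
    obtain ⟨p, hp⟩ := IsCompact.nonempty_iInter_of_directed_nonempty_isCompact_isClosed
      S hdir hne (fun K => (hcl K).isCompact) hcl
    have hpK : ∀ K, p ∈ S K := Set.mem_iInter.mp hp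
    have hhp : h p.1 = h p.2 := by
      apply Subtype.ext
      funext n
      by_cases hn : n < ℓ
      · have h1 := induced_first hind p.1 ⟨n, by omega⟩
        have h2 := induced_first hind p.2 ⟨n, by omega⟩
        rw [← h1, ← h2, (hpK 0).1.1]
      · have h1 := induced_last hind p.1 (n - ℓ)
        have h2 := induced_last hind p.2 (n - ℓ)
        have h3 := (hpK (ℓ + n)).1.2 (n - ℓ) (by omega)
        have e : ℓ + (n - ℓ) = n := by omega
        rw [e] at h1 h2
        rw [← h1, ← h2, h3]
    exact (hpK 0).2 (by rw [hinj hhp])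
  end DGraph

/-- There is a one-to-one correspondence between (ℓ,c)-block maps ψ and
(ℓ,c)-sliding block codes h, under which ψ satisfies the surjectivity (resp.
injectivity) condition if and only if h is surjective (resp. injective). -/
theorem blockMap_slidingBlockCode_correspondence (E F : DGraph)
    (hEfin : E.IsFinite) (hFfin : F.IsFinite) (hEns : E.NoSinks) (hFns : F.NoSinks)
    (ℓ c : ℕ) :
    ∃ Φ : {ψ : E.FinPath (1 + ℓ + c) → F.FinPath (1 + ℓ) // DGraph.IsCompatible E F ℓ c ψ} ≃
        {h : E.PathSpace → F.PathSpace //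
          DGraph.IsSlidingBlockCode E F ℓ h ∧ DGraph.HasContinuityConstant E F ℓ c h},
      ∀ ψ, DGraph.InducedOnPaths E F ℓ c ψ.1 (Φ ψ).1 ∧
        (DGraph.SurjCondition E F ℓ c ψ.1 ↔ Function.Surjective (Φ ψ).1) ∧
        (DGraph.InjCondition E F ℓ c ψ.1 ↔ Function.Injective (Φ ψ).1) := by
  classical
  refine ⟨Equiv.mk
    (fun ψ => ⟨DGraph.toH E F ℓ c ψ.1 ψ.2,
      ⟨⟨DGraph.continuous_toH E F ℓ c ψ.1 ψ.2, DGraph.sbc_toH E F ℓ c ψ.1 ψ.2⟩,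
        DGraph.hcc_toH E F ℓ c ψ.1 ψ.2⟩⟩)
    (fun h => ⟨DGraph.toPsi E F ℓ c hEns h.1,
      DGraph.toPsi_compat E F ℓ c hEns h.1 h.2.1.2 h.2.2⟩)
    (fun ψ => Subtype.ext (DGraph.toPsi_toH E F ℓ c hEns ψ.1 ψ.2))
    (fun h => Subtype.ext
      (DGraph.toH_toPsi E F ℓ c hEns h.1 h.2.1.2 h.2.2
        (DGraph.toPsi_compat E F ℓ c hEns h.1 h.2.1.2 h.2.2))), ?_⟩
  intro ψ
  refine ⟨DGraph.inducedOnPaths_toH E F ℓ c ψ.1 ψ.2, ?_, ?_⟩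
  · exact DGraph.surjCond_iff hEfin hFns (DGraph.continuous_toH E F ℓ c ψ.1 ψ.2)
      (DGraph.inducedOnPaths_toH E F ℓ c ψ.1 ψ.2)
  · exact DGraph.injCond_iff hEfin (DGraph.continuous_toH E F ℓ c ψ.1 ψ.2)
      (DGraph.inducedOnPaths_toH E F ℓ c ψ.1 ψ.2)
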